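/- Let K, W1, W3 be random variables on a probability space with values in finite nonempty sets. If H(W1 | K, W3) = 0 (W1 is a function of the pair (K, W3)) and I(W1 ; W3) = 0, then H(K) ≥ H(W1). (A message W1 that is independent of W3 but computable from (K, W3) forces the key K to carry at least H(W1) bits of entropy.) -/
import Mathlib
set_option linter.unusedSectionVars false


open MeasureTheory ProbabilityTheory

/-- Shannon entropy (natural logarithm) of a random variable with values in a finite type,
computed from the law `μ.map X`. -/
noncomputable def ent {Ω : Type*} [MeasurableSpace Ω] {S : Type*} [Fintype S] [MeasurableSpace S]
    (μ : Measure Ω) (X : Ω → S) : ℝ :=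
  ∑ s : S, Real.negMulLog ((μ.map X) {s}).toReal

section aux
open Real Finset

variable {Ω : Type*} [MeasurableSpace Ω] {μ : Measure Ω} [IsProbabilityMeasure μ]
variable {S T : Type*} [Fintype S] [MeasurableSpace S] [MeasurableSingletonClass S]
  [Fintype T] [MeasurableSpace T] [MeasurableSingletonClass T]

lemma negMulLog_sum_le {ι : Type*} (s : Finset ι) (a : ι → ℝ) (ha : ∀ i ∈ s, 0 ≤ a i) :
    negMulLog (∑ i ∈ s, a i) ≤ ∑ i ∈ s, negMulLog (a i) := by
  have hS : ∀ i ∈ s, a i ≤ ∑ j ∈ s, a j := fun i hi => Finset.single_le_sum ha hi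
  have h1 : negMulLog (∑ i ∈ s, a i) = ∑ i ∈ s, -(a i * Real.log (∑ j ∈ s, a j)) := by
    rw [negMulLog, neg_mul, Finset.sum_mul, ← Finset.sum_neg_distrib]
  rw [h1]
  refine Finset.sum_le_sum fun i hi => ?_
  rcases eq_or_lt_of_le (ha i hi) with h0 | h0
  · simp [← h0, negMulLog]
  · rw [negMulLog, neg_mul, neg_le_neg_iff]
    exact mul_le_mul_of_nonneg_left (Real.log_le_log h0 (hS i hi)) (ha i hi)

lemma ent_eq {X : Ω → S} (hX : Measurable X) :
    ent μ X = ∑ s : S, negMulLog ((μ (X ⁻¹' {s})).toReal) := by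
  unfold ent
  refine Finset.sum_congr rfl fun s _ => ?_
  rw [Measure.map_apply hX (measurableSet_singleton s)]

lemma marg_right {X : Ω → S} {Y : Ω → T} (hX : Measurable X) (hY : Measurable Y) (t : T) :
    (μ (Y ⁻¹' {t})).toReal
      = ∑ s : S, (μ ((fun ω => (X ω, Y ω)) ⁻¹' {(s, t)})).toReal := by
  have h1 : μ (Y ⁻¹' {t}) = ∑ s : S, μ ((fun ω => (X ω, Y ω)) ⁻¹' {(s, t)}) := by
    rw [← measure_biUnion_finset]
    · congr 1
      ext ω
      simp [Set.mem_preimage, Prod.ext_iff]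
    · intro s _ s' _ hss
      apply Set.disjoint_left.2
      intro ω h1 h2
      simp only [Set.mem_preimage, Set.mem_singleton_iff, Prod.ext_iff] at h1 h2
      exact hss (h1.1 ▸ h2.1)
    · intro s _
      exact (hX.prodMk hY) (measurableSet_singleton _)
  rw [h1, ENNReal.toReal_sum fun s _ => (measure_lt_top μ _).ne]

lemma marg_left {X : Ω → S} {Y : Ω → T} (hX : Measurable X) (hY : Measurable Y) (s : S) :
    (μ (X ⁻¹' {s})).toReal
      = ∑ t : T, (μ ((fun ω => (X ω, Y ω)) ⁻¹' {(s, t)})).toReal := by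
  have h1 : μ (X ⁻¹' {s}) = ∑ t : T, μ ((fun ω => (X ω, Y ω)) ⁻¹' {(s, t)}) := by
    rw [← measure_biUnion_finset]
    · congr 1
      ext ω
      simp [Set.mem_preimage, Prod.ext_iff]
    · intro t _ t' _ htt
      apply Set.disjoint_left.2
      intro ω h1 h2
      simp only [Set.mem_preimage, Set.mem_singleton_iff, Prod.ext_iff] at h1 h2
      exact htt (h1.2 ▸ h2.2)
    · intro t _
      exact (hX.prodMk hY) (measurableSet_singleton _)
  rw [h1, ENNReal.toReal_sum fun t _ => (measure_lt_top μ _).ne]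

lemma sum_meas_one {X : Ω → S} (hX : Measurable X) :
    ∑ s : S, (μ (X ⁻¹' {s})).toReal = 1 := by
  have h1 : (1 : ENNReal) = ∑ s : S, μ (X ⁻¹' {s}) := by
    rw [← measure_biUnion_finset]
    · rw [show (⋃ s ∈ Finset.univ, X ⁻¹' {s}) = Set.univ by ext ω; simp]
      exact (measure_univ).symm
    · intro s _ s' _ hss
      apply Set.disjoint_left.2
      intro ω h1 h2
      simp only [Set.mem_preimage, Set.mem_singleton_iff] at h1 h2
      exact hss (h1 ▸ h2)
    · intro s _
      exact hX (measurableSet_singleton _)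
  rw [← ENNReal.toReal_sum fun s _ => (measure_lt_top μ _).ne, ← h1, ENNReal.toReal_one]

/-- `H(Y) ≤ H(X, Y)` -/
lemma ent_le_ent_pair {X : Ω → S} {Y : Ω → T} (hX : Measurable X) (hY : Measurable Y) :
    ent μ Y ≤ ent μ (fun ω => (X ω, Y ω)) := by
  rw [ent_eq hY, ent_eq (hX.prodMk hY), Fintype.sum_prod_type, Finset.sum_comm]
  refine Finset.sum_le_sum fun t _ => ?_
  rw [marg_right hX hY t]
  exact negMulLog_sum_le _ _ fun s _ => ENNReal.toReal_nonneg

/-- subadditivity `H(X, Y) ≤ H(X) + H(Y)` -/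
lemma ent_pair_le {X : Ω → S} {Y : Ω → T} (hX : Measurable X) (hY : Measurable Y) :
    ent μ (fun ω => (X ω, Y ω)) ≤ ent μ X + ent μ Y := by
  set P := fun ω => (X ω, Y ω) with hP
  set q : S × T → ℝ := fun st => (μ (P ⁻¹' {st})).toReal with hq
  set a : S → ℝ := fun s => (μ (X ⁻¹' {s})).toReal with haa
  set b : T → ℝ := fun t => (μ (Y ⁻¹' {t})).toReal with hbb
  have hq0 : ∀ st, 0 ≤ q st := fun st => ENNReal.toReal_nonneg
  have hal : ∀ s, a s = ∑ t : T, q (s, t) := fun s => marg_left hX hY s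
  have hbl : ∀ t, b t = ∑ s : S, q (s, t) := fun t => marg_right hX hY t
  have hqa : ∀ st : S × T, q st ≤ a st.1 := by
    intro ⟨s, t⟩
    rw [hal s]
    exact Finset.single_le_sum (fun t _ => hq0 (s, t)) (Finset.mem_univ t)
  have hqb : ∀ st : S × T, q st ≤ b st.2 := by
    intro ⟨s, t⟩
    rw [hbl t]
    exact Finset.single_le_sum (fun s _ => hq0 (s, t)) (Finset.mem_univ s)
  have ha0 : ∀ s, 0 ≤ a s := fun s => ENNReal.toReal_nonneg
  have hb0 : ∀ t, 0 ≤ b t := fun t => ENNReal.toReal_nonneg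
  have hsa : ∑ s : S, a s = 1 := sum_meas_one hX
  have hsb : ∑ t : T, b t = 1 := sum_meas_one hY
  have hsq : ∑ st : S × T, q st = 1 := sum_meas_one (hX.prodMk hY)
  have key : ∀ st : S × T,
      negMulLog (q st) ≤ -(q st * Real.log (a st.1)) + -(q st * Real.log (b st.2))
        + (a st.1 * b st.2 - q st) := by
    intro st
    rcases eq_or_lt_of_le (hq0 st) with h0 | h0
    · rw [← h0]
      simp [mul_nonneg (ha0 st.1) (hb0 st.2)]
    · have hA : 0 < a st.1 := lt_of_lt_of_le h0 (hqa st)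
      have hB : 0 < b st.2 := lt_of_lt_of_le h0 (hqb st)
      have hAB : 0 < a st.1 * b st.2 / q st := div_pos (mul_pos hA hB) h0
      have hlog := Real.log_le_sub_one_of_pos hAB
      rw [Real.log_div (mul_pos hA hB).ne' h0.ne', Real.log_mul hA.ne' hB.ne'] at hlog
      have h2 := mul_le_mul_of_nonneg_left hlog (hq0 st)
      have hcan : q st * (a st.1 * b st.2 / q st) = a st.1 * b st.2 := by field_simp
      rw [negMulLog, neg_mul]
      nlinarith [h2, hcan]
  have hsum := Finset.sum_le_sum fun st (_ : st ∈ Finset.univ) => key st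
  rw [Finset.sum_add_distrib, Finset.sum_add_distrib] at hsum
  have e1 : ∑ st : S × T, -(q st * Real.log (a st.1)) = ent μ X := by
    rw [ent_eq hX, Fintype.sum_prod_type]
    refine Finset.sum_congr rfl fun s _ => ?_
    rw [show (μ (X ⁻¹' {s})).toReal = a s from rfl, negMulLog, neg_mul, hal s,
      Finset.sum_mul, ← Finset.sum_neg_distrib]
    simp only [← hal]
  have e2 : ∑ st : S × T, -(q st * Real.log (b st.2)) = ent μ Y := by
    rw [ent_eq hY, Fintype.sum_prod_type, Finset.sum_comm]
    refine Finset.sum_congr rfl fun t _ => ?_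
    rw [show (μ (Y ⁻¹' {t})).toReal = b t from rfl, negMulLog, neg_mul, hbl t,
      Finset.sum_mul, ← Finset.sum_neg_distrib]
    simp only [← hbl]
  have e3 : ∑ st : S × T, (a st.1 * b st.2 - q st) = 0 := by
    rw [Finset.sum_sub_distrib, hsq, Fintype.sum_prod_type]
    simp only [← Finset.mul_sum, hsb, mul_one, hsa]
    ring
  have hE : ent μ P = ∑ st : S × T, negMulLog (q st) := ent_eq (hX.prodMk hY)
  rw [hE]
  rw [e1, e2, e3] at hsum
  linarith

lemma ent_congr {X : Ω → S} {Y : Ω → T} (e : S ≃ T) (h : ∀ ω, Y ω = e (X ω))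
    (hX : Measurable X) (hY : Measurable Y) : ent μ Y = ent μ X := by
  rw [ent_eq hX, ent_eq hY, ← Equiv.sum_comp e (fun t => negMulLog ((μ (Y ⁻¹' {t})).toReal))]
  refine Finset.sum_congr rfl fun s _ => ?_
  have hset : Y ⁻¹' {e s} = X ⁻¹' {s} := by
    ext ω
    simp [h ω, Set.mem_preimage, EmbeddingLike.apply_eq_iff_eq]
  rw [hset]

end aux

/-- Conditional entropy `H(X | Y) = H(X, Y) - H(Y)`. -/
noncomputable def condEnt {Ω S T : Type*} [MeasurableSpace Ω] [Fintype S] [MeasurableSpace S]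
    [Fintype T] [MeasurableSpace T] (μ : Measure Ω) (X : Ω → S) (Y : Ω → T) : ℝ :=
  ent μ (fun ω => (X ω, Y ω)) - ent μ Y

/-- Mutual information `I(X ; Y) = H(X) + H(Y) - H(X, Y)`. -/
noncomputable def mutInfo {Ω S T : Type*} [MeasurableSpace Ω] [Fintype S] [MeasurableSpace S]
    [Fintype T] [MeasurableSpace T] (μ : Measure Ω) (X : Ω → S) (Y : Ω → T) : ℝ :=
  ent μ X + ent μ Y - ent μ (fun ω => (X ω, Y ω))

/-- Conditional mutual information `I(X ; Y | Z) = H(X | Z) + H(Y | Z) - H(X, Y | Z)`. -/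
noncomputable def condMutInfo {Ω S T U : Type*} [MeasurableSpace Ω] [Fintype S] [MeasurableSpace S]
    [Fintype T] [MeasurableSpace T] [Fintype U] [MeasurableSpace U]
    (μ : Measure Ω) (X : Ω → S) (Y : Ω → T) (Z : Ω → U) : ℝ :=
  condEnt μ X Z + condEnt μ Y Z - condEnt μ (fun ω => (X ω, Y ω)) Z

theorem stmt_8
    {Ω : Type*} [MeasurableSpace Ω] (μ : Measure Ω) [IsProbabilityMeasure μ]
    {SK S1 S3 : Type*}
    [Fintype SK] [Nonempty SK] [MeasurableSpace SK] [MeasurableSingletonClass SK]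
    [Fintype S1] [Nonempty S1] [MeasurableSpace S1] [MeasurableSingletonClass S1]
    [Fintype S3] [Nonempty S3] [MeasurableSpace S3] [MeasurableSingletonClass S3]
    (K : Ω → SK) (W₁ : Ω → S1) (W₃ : Ω → S3)
    (hK : Measurable K) (hW₁ : Measurable W₁) (hW₃ : Measurable W₃)
    (hfun : condEnt μ W₁ (fun ω => (K ω, W₃ ω)) = 0)
    (hind : mutInfo μ W₁ W₃ = 0) :
    ent μ K ≥ ent μ W₁ := by
  have hpair13 : Measurable (fun ω => (W₁ ω, W₃ ω)) := hW₁.prodMk hW₃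
  have hK3 : Measurable (fun ω => (K ω, W₃ ω)) := hK.prodMk hW₃
  have h1 : ent μ W₁ + ent μ W₃ - ent μ (fun ω => (W₁ ω, W₃ ω)) = 0 := hind
  have h2 : ent μ (fun ω => (W₁ ω, (K ω, W₃ ω))) - ent μ (fun ω => (K ω, W₃ ω)) = 0 := hfun
  have h3 : ent μ (fun ω => (W₁ ω, W₃ ω)) ≤ ent μ (fun ω => (K ω, (W₁ ω, W₃ ω))) :=
    ent_le_ent_pair hK hpair13
  have h4 : ent μ (fun ω => (W₁ ω, (K ω, W₃ ω))) = ent μ (fun ω => (K ω, (W₁ ω, W₃ ω))) :=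
    ent_congr ⟨fun x => (x.2.1, (x.1, x.2.2)), fun x => (x.2.1, (x.1, x.2.2)),
      fun x => rfl, fun x => rfl⟩ (fun ω => rfl) (hK.prodMk hpair13) (hW₁.prodMk hK3)
  have h5 : ent μ (fun ω => (K ω, W₃ ω)) ≤ ent μ K + ent μ W₃ := ent_pair_le hK hW₃
  linarith
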